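/- An integral domain R is a unique factorization domain if and only if its multiplicative monoid R• = R\{0} is length-factorial, i.e., for every nonzero x, any two factorizations of x into irreducibles with the same number of irreducible factors are equal up to order and associates. -/

import Mathlib

open Multiset

namespace LF

variable (R : Type*) [CommRing R] [IsDomain R]

/-- Factorizations of a nonzero `x : R` into irreducibles, recorded as multisets of
irreducible associate classes whose product is the class of `x`. -/
def FactorsOf (x : R) : Set (Multiset (Associates R)) :=
  {s | (∀ a ∈ s, Irreducible a) ∧ s.prod = Associates.mk x}

/-- `R` is an atomic domain: every nonzero nonunit is a product of irreducibles. -/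
def Atomic : Prop := ∀ x : R, x ≠ 0 → ¬ IsUnit x → (FactorsOf R x).Nonempty

/-- A factorization relation of the multiplicative monoid `R• = R \ {0}`. -/
def IsRel (z1 z2 : Multiset (Associates R)) : Prop :=
  (∀ a ∈ z1, Irreducible a) ∧ (∀ a ∈ z2, Irreducible a) ∧ z1.prod = z2.prod

/-- An irredundant pair: no common irreducible. -/
def Irredundant (z1 z2 : Multiset (Associates R)) : Prop := ∀ a, a ∈ z1 → a ∉ z2

/-- A purely long irreducible of `R`: a non-prime irreducible (up to associates) that appears
only in the longer side of any irredundant unbalanced factorization relation. -/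
def PurelyLong (a : Associates R) : Prop :=
  Irreducible a ∧ ¬ Prime a ∧
    ∀ z1 z2, IsRel R z1 z2 → Irredundant R z1 z2 → card z1 ≠ card z2 →
      a ∈ z1 → card z2 < card z1

/-- A purely short irreducible of `R`. -/
def PurelyShort (a : Associates R) : Prop :=
  Irreducible a ∧ ¬ Prime a ∧
    ∀ z1 z2, IsRel R z1 z2 → Irredundant R z1 z2 → card z1 ≠ card z2 →
      a ∈ z1 → card z1 < card z2
section Proof

variable {R}

private lemma irr_prod_ne_zero {s : Multiset (Associates R)}
    (hs : ∀ a ∈ s, Irreducible a) : s.prod ≠ 0 := by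
  intro h
  rw [Multiset.prod_eq_zero_iff] at h
  exact not_irreducible_zero (hs 0 h)

/-- Reformulated length-factoriality. -/
private lemma lf' (H : ∀ x : R, x ≠ 0 →
      ∀ s ∈ FactorsOf R x, ∀ t ∈ FactorsOf R x, card s = card t → s = t)
    {s t : Multiset (Associates R)} (hs : ∀ a ∈ s, Irreducible a)
    (ht : ∀ a ∈ t, Irreducible a) (hp : s.prod = t.prod)
    (hc : card s = card t) : s = t := by
  obtain ⟨x, hx⟩ := Associates.mk_surjective s.prod
  have hx0 : x ≠ 0 := by
    intro h
    exact irr_prod_ne_zero hs (by rw [← hx, h]; simp)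
  exact H x hx0 s ⟨hs, hx.symm⟩ t ⟨ht, by rw [← hp, hx]⟩ hc

/-- Lift a multiset of irreducible associate classes to a multiset of irreducibles in `R`. -/
private lemma lift_factors (s : Multiset (Associates R)) (hs : ∀ a ∈ s, Irreducible a) :
    ∃ f : Multiset R, (∀ b ∈ f, Irreducible b) ∧ f.map Associates.mk = s := by
  induction s using Multiset.induction with
  | empty => exact ⟨0, by simp, by simp⟩
  | cons a s ih =>
    obtain ⟨f, hf1, hf2⟩ := ih fun x hx => hs x (Multiset.mem_cons_of_mem hx)
    obtain ⟨b, hb⟩ := Associates.mk_surjective a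
    refine ⟨b ::ₘ f, ?_, by simp [hf2, hb]⟩
    intro c hc
    rcases Multiset.mem_cons.mp hc with h | h
    · subst h
      exact Associates.irreducible_mk.mp (hb ▸ hs a (Multiset.mem_cons_self a s))
    · exact hf1 c h

private lemma map_eq_of_rel {f g : Multiset R} (h : Multiset.Rel Associated f g) :
    f.map Associates.mk = g.map Associates.mk := by
  induction h with
  | zero => simp
  | cons hab _ ih =>
    simp only [Multiset.map_cons, ih]
    rw [Associates.mk_eq_mk_iff_associated.mpr hab]

private lemma rel_of_map_eq {f g : Multiset R} (h : f.map Associates.mk = g.map Associates.mk) :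
    Multiset.Rel Associated f g := by
  induction f using Multiset.induction generalizing g with
  | empty =>
    have : g.map Associates.mk = 0 := by simpa using h.symm
    rw [Multiset.map_eq_zero] at this
    simp [this]
  | cons a f ih =>
    have hmem : Associates.mk a ∈ g.map Associates.mk := by
      rw [← h]; simp
    obtain ⟨b, hbg, hba⟩ := Multiset.mem_map.mp hmem
    obtain ⟨g', rfl⟩ := Multiset.exists_cons_of_mem hbg
    have h' : f.map Associates.mk = g'.map Associates.mk := by
      have : Associates.mk a ::ₘ f.map Associates.mk
          = Associates.mk a ::ₘ g'.map Associates.mk := by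
        simpa [hba] using h
      exact Multiset.cons_inj_right _ |>.mp this
    exact Multiset.Rel.cons (Associates.mk_eq_mk_iff_associated.mp hba.symm) (ih h')

/-- The key combinatorial lemma: in an atomic length-factorial domain, any two factorizations
of the same element have the same length. -/
private lemma balanced (hAt : Atomic R)
    (H : ∀ x : R, x ≠ 0 →
      ∀ s ∈ FactorsOf R x, ∀ t ∈ FactorsOf R x, card s = card t → s = t) :
    ∀ s t : Multiset (Associates R), (∀ a ∈ s, Irreducible a) → (∀ a ∈ t, Irreducible a) →
      s.prod = t.prod → card s = card t := by
  classical
  by_contra hcon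
  push_neg at hcon
  obtain ⟨s0, t0, hs0, ht0, hp0, hne0⟩ := hcon
  have hex : ∃ d : ℕ, 0 < d ∧ ∃ s t : Multiset (Associates R),
      (∀ a ∈ s, Irreducible a) ∧ (∀ a ∈ t, Irreducible a) ∧ s.prod = t.prod ∧
        card s = card t + d := by
    rcases Nat.lt_or_ge (card t0) (card s0) with h | h
    · exact ⟨card s0 - card t0, by omega, s0, t0, hs0, ht0, hp0, by omega⟩
    · exact ⟨card t0 - card s0, by omega, t0, s0, ht0, hs0, hp0.symm, by omega⟩
  set d := Nat.find hex with hdd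
  obtain ⟨hdpos, s, t, hs, ht, hprod, hcard⟩ := Nat.find_spec hex
  have hmin : ∀ d' : ℕ, (0 < d' ∧ ∃ s t : Multiset (Associates R),
      (∀ a ∈ s, Irreducible a) ∧ (∀ a ∈ t, Irreducible a) ∧ s.prod = t.prod ∧
        card s = card t + d') → d ≤ d' := fun d' h => Nat.find_min' hex h
  -- pass to the irredundant core
  set S : Multiset (Associates R) := s - t with hSdef
  set T : Multiset (Associates R) := t - s with hTdef
  have hSsub : S ≤ s := tsub_le_self
  have hTsub : T ≤ t := tsub_le_self
  have hSirr : ∀ a ∈ S, Irreducible a := fun a ha => hs a (Multiset.mem_of_le hSsub ha)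
  have hTirr : ∀ a ∈ T, Irreducible a := fun a ha => ht a (Multiset.mem_of_le hTsub ha)
  have hIne : (s ∩ t).prod ≠ 0 := by
    apply irr_prod_ne_zero
    exact fun a ha => hs a (Multiset.mem_of_le (Multiset.inter_le_left (s := s) (t := t)) ha)
  have hs_eq : S + s ∩ t = s := Multiset.sub_add_inter s t
  have ht_eq : T + t ∩ s = t := Multiset.sub_add_inter t s
  have hST : S.prod = T.prod := by
    have h1 : S.prod * (s ∩ t).prod = s.prod := by rw [← Multiset.prod_add, hs_eq]
    have h2 : T.prod * (s ∩ t).prod = t.prod := by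
      rw [Multiset.inter_comm, ← Multiset.prod_add, ht_eq]
    apply mul_right_cancel₀ hIne
    rw [h1, h2, hprod]
  have hScard : card S = card T + d := by
    have h1 : card S + card (s ∩ t) = card s := by rw [← Multiset.card_add, hs_eq]
    have h2 : card T + card (t ∩ s) = card t := by rw [← Multiset.card_add, ht_eq]
    have h3 : card (t ∩ s) = card (s ∩ t) := by rw [Multiset.inter_comm]
    omega
  have hdisj : ∀ a, a ∈ S → a ∉ T := by
    intro a haS haT
    have h1 : 0 < count a S := Multiset.count_pos.mpr haS
    have h2 : 0 < count a T := Multiset.count_pos.mpr haT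
    have h1' : count a S = count a s - count a t := by
      rw [hSdef, Multiset.count_sub]
    have h2' : count a T = count a t - count a s := by
      rw [hTdef, Multiset.count_sub]
    omega
  -- T has at least 2 elements
  have hTcard2 : 2 ≤ card T := by
    by_contra hlt
    obtain h | h : card T = 0 ∨ card T = 1 := by omega
    · have hT0 : T = 0 := Multiset.card_eq_zero.mp h
      have hS1 : S.prod = 1 := by rw [hST, hT0]; simp
      have hSne : S ≠ 0 := by
        intro h0; rw [h0] at hScard; simp at hScard; omega
      obtain ⟨a, ha⟩ := Multiset.exists_mem_of_ne_zero hSne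
      exact (hSirr a ha).not_isUnit (isUnit_of_dvd_one (hS1 ▸ Multiset.dvd_prod ha))
    · obtain ⟨β, hT1⟩ := Multiset.card_eq_one.mp h
      have hcS : 2 ≤ card S := by omega
      obtain ⟨α, hαS⟩ := Multiset.exists_mem_of_ne_zero
        (show S ≠ 0 by intro h0; rw [h0] at hcS; simp at hcS)
      obtain ⟨S₂, hScons⟩ := Multiset.exists_cons_of_mem hαS
      have hβ : β = α * S₂.prod := by
        have : T.prod = β := by rw [hT1]; simp
        rw [← this, hST.symm, hScons, Multiset.prod_cons]
      have hβirr : Irreducible β := hTirr β (by rw [hT1]; simp)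
      rcases hβirr.isUnit_or_isUnit hβ with hu | hu
      · exact (hSirr α hαS).not_isUnit hu
      · have hS₂ne : S₂ ≠ 0 := by
          intro h0
          rw [hScons, h0] at hcS; simp at hcS
        obtain ⟨b, hb⟩ := Multiset.exists_mem_of_ne_zero hS₂ne
        have : b ∣ S₂.prod := Multiset.dvd_prod hb
        exact (hSirr b (by rw [hScons]; exact Multiset.mem_cons_of_mem hb)).not_isUnit
          (isUnit_of_dvd_unit this hu)
  -- pick elements and representatives
  have hSpos : 0 < card S := by omega
  obtain ⟨α, hαS⟩ := Multiset.exists_mem_of_ne_zero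
    (show S ≠ 0 by intro h0; rw [h0] at hSpos; simp at hSpos)
  obtain ⟨S₂, hScons⟩ := Multiset.exists_cons_of_mem hαS
  obtain ⟨β, hβT⟩ := Multiset.exists_mem_of_ne_zero
    (show T ≠ 0 by intro h0; rw [h0] at hTcard2; simp at hTcard2)
  obtain ⟨T₂, hTcons⟩ := Multiset.exists_cons_of_mem hβT
  have hαβ : α ≠ β := fun h => hdisj α hαS (by rw [h]; exact hβT)
  obtain ⟨p1, hp1⟩ := Associates.mk_surjective α
  obtain ⟨P₂, hP2⟩ := Associates.mk_surjective S₂.prod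
  obtain ⟨q0, hq0⟩ := Associates.mk_surjective β
  obtain ⟨Q₂, hQ2⟩ := Associates.mk_surjective T₂.prod
  have hp1irr : Irreducible p1 := Associates.irreducible_mk.mp (by rw [hp1]; exact hSirr α hαS)
  have hmkeq : Associates.mk (q0 * Q₂) = Associates.mk (p1 * P₂) := by
    rw [← Associates.mk_mul_mk, ← Associates.mk_mul_mk, hp1, hP2, hq0, hQ2]
    rw [← Multiset.prod_cons, ← Multiset.prod_cons, ← hScons, ← hTcons, hST]
  obtain ⟨u, hu⟩ := Associates.mk_eq_mk_iff_associated.mp hmkeq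
  set q1 : R := q0 * u with hq1def
  have hq1 : Associates.mk q1 = β := by
    rw [hq1def, ← hq0]
    exact (Associates.mk_eq_mk_iff_associated.mpr ⟨u, rfl⟩).symm
  have hq1irr : Irreducible q1 := Associates.irreducible_mk.mp (by rw [hq1]; exact hTirr β hβT)
  have hE : p1 * P₂ = q1 * Q₂ := by
    rw [← hu, hq1def]; ring
  -- nonzeroness
  have hS₂irr : ∀ a ∈ S₂, Irreducible a := fun a ha =>
    hSirr a (by rw [hScons]; exact Multiset.mem_cons_of_mem ha)
  have hT₂irr : ∀ a ∈ T₂, Irreducible a := fun a ha =>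
    hTirr a (by rw [hTcons]; exact Multiset.mem_cons_of_mem ha)
  have hQ2ne : Q₂ ≠ 0 := by
    intro h0
    rw [h0, Associates.mk_eq_zero.mpr rfl] at hQ2
    exact irr_prod_ne_zero hT₂irr hQ2.symm
  set w : R := P₂ + Q₂ with hwdef
  set e : R := p1 + q1 with hedef
  have hkey : p1 * w = Q₂ * e := by
    rw [hwdef, hedef, mul_add, hE]; ring
  -- degenerate cases
  by_cases hw0 : w = 0
  · -- P₂ = -Q₂, so S₂.prod = T₂.prod
    have hPQ : P₂ = -Q₂ := eq_neg_of_add_eq_zero_left (by rw [← hwdef]; exact hw0)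
    have hmk : Associates.mk P₂ = Associates.mk Q₂ := by
      rw [hPQ]
      exact Associates.mk_eq_mk_iff_associated.mpr ⟨-1, by simp⟩
    have hprod2 : S₂.prod = T₂.prod := by rw [← hP2, ← hQ2, hmk]
    have hEQ : S + T₂ = T + S₂ := by
      apply lf' H
      · intro a ha
        rcases Multiset.mem_add.mp ha with h | h
        exacts [hSirr a h, hT₂irr a h]
      · intro a ha
        rcases Multiset.mem_add.mp ha with h | h
        exacts [hTirr a h, hS₂irr a h]
      · rw [Multiset.prod_add, Multiset.prod_add, hST, hprod2]
      · simp only [Multiset.card_add]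
        have h1 : card S = card S₂ + 1 := by rw [hScons]; simp
        have h2 : card T = card T₂ + 1 := by rw [hTcons]; simp
        omega
    have := congrArg (count α) hEQ
    simp only [Multiset.count_add] at this
    have hcT : count α T = 0 := Multiset.count_eq_zero.mpr (hdisj α hαS)
    have hcT₂ : count α T₂ = 0 := by
      have hle : T₂ ≤ T := by rw [hTcons]; exact Multiset.le_cons_self T₂ β
      have h := Multiset.count_le_of_le α hle
      omega
    have hcS : count α S = count α S₂ + 1 := by rw [hScons]; simp
    omega
  by_cases he0 : e = 0
  · -- p1 = -q1, so α = β, contradicting disjointness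
    have hpq : p1 = -q1 := eq_neg_of_add_eq_zero_left (by rw [← hedef]; exact he0)
    have : α = β := by
      rw [← hp1, ← hq1, hpq]
      exact Associates.mk_eq_mk_iff_associated.mpr ⟨-1, by simp⟩
    exact hαβ this
  -- factor w and e
  have hfw : ∃ fw : Multiset (Associates R),
      (∀ a ∈ fw, Irreducible a) ∧ fw.prod = Associates.mk w := by
    by_cases hu : IsUnit w
    · exact ⟨0, by simp, by simp [(Associates.mk_eq_one.mpr hu)]⟩
    · obtain ⟨fw, hfw⟩ := hAt w hw0 hu
      exact ⟨fw, hfw.1, hfw.2⟩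
  have hfe : ∃ fe : Multiset (Associates R),
      (∀ a ∈ fe, Irreducible a) ∧ fe.prod = Associates.mk e := by
    by_cases hu : IsUnit e
    · exact ⟨0, by simp, by simp [(Associates.mk_eq_one.mpr hu)]⟩
    · obtain ⟨fe, hfe⟩ := hAt e he0 hu
      exact ⟨fe, hfe.1, hfe.2⟩
  obtain ⟨fw, hfwirr, hfwprod⟩ := hfw
  obtain ⟨fe, hfeirr, hfeprod⟩ := hfe
  -- neither α nor β occurs in fe
  have hfeα : α ∉ fe := by
    intro hmem
    have h1 : α ∣ fe.prod := Multiset.dvd_prod hmem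
    rw [hfeprod, ← hp1, Associates.mk_dvd_mk] at h1
    have h2 : p1 ∣ q1 := by
      have h3 := dvd_sub h1 (dvd_refl p1)
      rw [hedef] at h3
      simpa using h3
    have h4 : Associated p1 q1 := hp1irr.associated_of_dvd hq1irr h2
    exact hαβ (by rw [← hp1, ← hq1, Associates.mk_eq_mk_iff_associated.mpr h4])
  have hfeβ : β ∉ fe := by
    intro hmem
    have h1 : β ∣ fe.prod := Multiset.dvd_prod hmem
    rw [hfeprod, ← hq1, Associates.mk_dvd_mk] at h1
    have h2 : q1 ∣ p1 := by
      have h3 := dvd_sub h1 (dvd_refl q1)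
      rw [hedef] at h3
      simpa using h3
    have h4 : Associated q1 p1 := hq1irr.associated_of_dvd hp1irr h2
    exact hαβ (by rw [← hp1, ← hq1, Associates.mk_eq_mk_iff_associated.mpr h4.symm])
  -- the new relation
  set z1 : Multiset (Associates R) := α ::ₘ fw with hz1def
  set z2 : Multiset (Associates R) := T₂ + fe with hz2def
  have hz1irr : ∀ a ∈ z1, Irreducible a := by
    intro a ha
    rcases Multiset.mem_cons.mp ha with h | h
    · exact h ▸ hSirr α hαS
    · exact hfwirr a h
  have hz2irr : ∀ a ∈ z2, Irreducible a := by
    intro a ha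
    rcases Multiset.mem_add.mp ha with h | h
    exacts [hT₂irr a h, hfeirr a h]
  have hzprod : z1.prod = z2.prod := by
    rw [hz1def, hz2def, Multiset.prod_cons, Multiset.prod_add, hfwprod, hfeprod,
      ← hp1, ← hQ2, Associates.mk_mul_mk, Associates.mk_mul_mk, hkey]
  -- α does not occur in z2
  have hαT₂ : count α T₂ = 0 := by
    have hle : T₂ ≤ T := by rw [hTcons]; exact Multiset.le_cons_self T₂ β
    have h := Multiset.count_le_of_le α hle
    have hcT : count α T = 0 := Multiset.count_eq_zero.mpr (hdisj α hαS)
    omega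
  have hαz2 : α ∉ z2 := by
    intro h
    rcases Multiset.mem_add.mp h with h | h
    · exact absurd (Multiset.count_pos.mpr h) (by omega)
    · exact hfeα h
  -- a general combination principle
  have hcomb : ∀ (a b : ℕ) (u v x y : Multiset (Associates R)),
      (∀ c ∈ u, Irreducible c) → (∀ c ∈ v, Irreducible c) →
      (∀ c ∈ x, Irreducible c) → (∀ c ∈ y, Irreducible c) →
      u.prod = v.prod → x.prod = y.prod →
      a * card u + b * card x = a * card v + b * card y →
      a • u + b • x = a • v + b • y := by
    intro a b u v x y hu hv hx hy hpuv hpxy hc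
    apply lf' H
    · intro c hc'
      rcases Multiset.mem_add.mp hc' with h | h
      exacts [hu c (Multiset.mem_of_mem_nsmul h), hx c (Multiset.mem_of_mem_nsmul h)]
    · intro c hc'
      rcases Multiset.mem_add.mp hc' with h | h
      exacts [hv c (Multiset.mem_of_mem_nsmul h), hy c (Multiset.mem_of_mem_nsmul h)]
    · rw [Multiset.prod_add, Multiset.prod_add, Multiset.prod_nsmul, Multiset.prod_nsmul,
        Multiset.prod_nsmul, Multiset.prod_nsmul, hpuv, hpxy]
    · simpa only [Multiset.card_add, Multiset.card_nsmul] using hc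
  -- compare lengths
  rcases Nat.lt_trichotomy (card z1) (card z2) with hlt | heq | hgt
  · -- z1 shorter : combine with (S, T)
    set a : ℕ := card z2 - card z1 with hadef
    have hEQ : a • S + d • z1 = a • T + d • z2 := by
      apply hcomb a d S T z1 z2 hSirr hTirr hz1irr hz2irr hST hzprod
      have h1 : a + card z1 = card z2 := by omega
      calc a * card S + d * card z1 = a * (card T + d) + d * card z1 := by rw [hScard]
        _ = a * card T + d * (a + card z1) := by ring
        _ = a * card T + d * card z2 := by rw [h1]
    have := congrArg (count α) hEQ
    simp only [Multiset.count_add, Multiset.count_nsmul] at this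
    have hcTα : count α T = 0 := Multiset.count_eq_zero.mpr (hdisj α hαS)
    have hcz2α : count α z2 = 0 := Multiset.count_eq_zero.mpr hαz2
    have hcz1α : 0 < count α z1 := Multiset.count_pos.mpr (Multiset.mem_cons_self α fw)
    rw [hcTα, hcz2α] at this
    simp only [Nat.mul_zero, Nat.add_zero] at this
    have hpos : 0 < d * count α z1 := Nat.mul_pos hdpos hcz1α
    have hle : d * count α z1 ≤ a * count α S + d * count α z1 := Nat.le_add_left _ _
    rw [this] at hle
    exact absurd hle (Nat.not_le_of_gt hpos)
  · -- equal lengths: LF forces equality, contradiction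
    have := lf' H hz1irr hz2irr hzprod heq
    exact hαz2 (this ▸ Multiset.mem_cons_self α fw)
  · -- z1 longer: contradicts minimality of d via combination
    set b : ℕ := card z1 - card z2 with hbdef
    have hdb : d ≤ b := hmin b ⟨by omega, z1, z2, hz1irr, hz2irr, hzprod, by omega⟩
    have hEQ : b • T + d • z1 = b • S + d • z2 := by
      apply hcomb b d T S z1 z2 hTirr hSirr hz1irr hz2irr hST.symm hzprod
      have h1 : b + card z2 = card z1 := by omega
      calc b * card T + d * card z1 = b * card T + d * (b + card z2) := by rw [h1]
        _ = b * (card T + d) + d * card z2 := by ring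
        _ = b * card S + d * card z2 := by rw [hScard]
    have := congrArg (count β) hEQ
    simp only [Multiset.count_add, Multiset.count_nsmul] at this
    have hcSβ : count β S = 0 := by
      apply Multiset.count_eq_zero.mpr
      intro h
      exact hdisj β h hβT
    have hcTβ : count β T = count β T₂ + 1 := by rw [hTcons]; simp
    have hcz1β : count β z1 = count β fw := by
      rw [hz1def]
      exact Multiset.count_cons_of_ne (Ne.symm hαβ) fw
    have hcz2β : count β z2 = count β T₂ := by
      rw [hz2def, Multiset.count_add, Multiset.count_eq_zero.mpr hfeβ, Nat.add_zero]
    rw [hcSβ, hcTβ, hcz1β, hcz2β] at this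
    -- this : b * (count β T₂ + 1) + d * count β fw = b * 0 + d * count β T₂
    have hmul : d * count β T₂ ≤ b * count β T₂ := Nat.mul_le_mul_right _ hdb
    have hexp : b * (count β T₂ + 1) = b * count β T₂ + b := by ring
    rw [hexp, Nat.mul_zero, Nat.zero_add] at this
    have h1 : b * count β T₂ + b ≤ b * count β T₂ + b + d * count β fw :=
      Nat.le_add_right _ _
    rw [this] at h1
    have h2 : b * count β T₂ + b ≤ b * count β T₂ + 0 := by simpa using h1.trans hmul
    have h3 : b ≤ 0 := Nat.le_of_add_le_add_left h2
    omega

end Proof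

/-- An integral domain is a unique factorization domain if and only if its
multiplicative monoid `R• = R \ {0}` is length-factorial: it is atomic and any two
factorizations of a nonzero element with the same length coincide (up to order and
associates). -/
theorem stmt19 :
    UniqueFactorizationMonoid R ↔
      (Atomic R ∧ ∀ x : R, x ≠ 0 →
        ∀ s ∈ FactorsOf R x, ∀ t ∈ FactorsOf R x, card s = card t → s = t) := by
  constructor
  · intro hufm
    constructor
    · intro x hx hxu
      refine ⟨(UniqueFactorizationMonoid.factors x).map Associates.mk, ?_, ?_⟩
      · intro a ha
        obtain ⟨b, hb, rfl⟩ := Multiset.mem_map.mp ha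
        exact Associates.irreducible_mk.mpr
          (UniqueFactorizationMonoid.irreducible_of_factor b hb)
      · rw [Associates.prod_mk]
        exact Associates.mk_eq_mk_iff_associated.mpr
          (UniqueFactorizationMonoid.factors_prod hx)
    · intro x hx s hsmem t htmem _
      obtain ⟨hs, hsp⟩ := hsmem
      obtain ⟨ht, htp⟩ := htmem
      obtain ⟨f, hf, hfs⟩ := lift_factors s hs
      obtain ⟨g, hg, hgt⟩ := lift_factors t ht
      have hfp : Associated f.prod g.prod := by
        rw [← Associates.mk_eq_mk_iff_associated, ← Associates.prod_mk,
          ← Associates.prod_mk, hfs, hgt, hsp, htp]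
      have hrel := UniqueFactorizationMonoid.factors_unique hf hg hfp
      rw [← hfs, ← hgt, map_eq_of_rel hrel]
  · rintro ⟨hAt, H⟩
    apply UniqueFactorizationMonoid.of_existsUnique_irreducible_factors
    · intro a ha
      by_cases hu : IsUnit a
      · exact ⟨0, by simp, by simpa using (associated_one_iff_isUnit.mpr hu).symm⟩
      · obtain ⟨s, hs, hsp⟩ := hAt a ha hu
        obtain ⟨f, hf, hfs⟩ := lift_factors s hs
        exact ⟨f, hf, Associates.mk_eq_mk_iff_associated.mp
          (by rw [← Associates.prod_mk, hfs, hsp])⟩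
    · intro f g hf hg hfg
      have hfi : ∀ a ∈ f.map Associates.mk, Irreducible a := by
        intro a ha
        obtain ⟨b, hb, rfl⟩ := Multiset.mem_map.mp ha
        exact Associates.irreducible_mk.mpr (hf b hb)
      have hgi : ∀ a ∈ g.map Associates.mk, Irreducible a := by
        intro a ha
        obtain ⟨b, hb, rfl⟩ := Multiset.mem_map.mp ha
        exact Associates.irreducible_mk.mpr (hg b hb)
      have h1 : (f.map Associates.mk).prod = (g.map Associates.mk).prod := by
        rw [Associates.prod_mk, Associates.prod_mk]
        exact Associates.mk_eq_mk_iff_associated.mpr hfg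
      have hc : card (f.map Associates.mk) = card (g.map Associates.mk) :=
        balanced hAt H _ _ hfi hgi h1
      exact rel_of_map_eq (lf' H hfi hgi h1 hc)

end LF
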